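/- arXiv:2301.03293 — 8 statements merged into one kernel-verified Lean document; each statement's English description precedes it below -/
import Mathlib

section
/- Let h : [0,∞) → ℝ be twice differentiable with h(0) ≥ 0, and suppose p₁, p₂ > 0 satisfy p₁ > −h'(0)/h(0) (when h(0) > 0) and the function v := h' + p₁·h satisfies v'(t) + p₂·v(t) ≥ 0 for all t ≥ 0 with v(0) > 0. Then h(t) ≥ 0 for all t ≥ 0. -/
lemma aux_gronwall (f f' : ℝ → ℝ) (c : ℝ)
    (hd : ∀ t ≥ (0:ℝ), HasDerivAt f (f' t) t)
    (h0 : f 0 ≥ 0)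
    (hineq : ∀ t ≥ (0:ℝ), f' t + c * f t ≥ 0) :
    ∀ t ≥ (0:ℝ), f t ≥ 0 := by
  set g : ℝ → ℝ := fun t => Real.exp (c * t) * f t with hg
  have hgderiv : ∀ t ≥ (0:ℝ), HasDerivAt g
      (Real.exp (c * t) * (f' t + c * f t)) t := by
    intro t ht
    have h1 : HasDerivAt (fun t => Real.exp (c * t)) (c * Real.exp (c * t)) t := by
      have := (Real.hasDerivAt_exp (c * t)).comp t ((hasDerivAt_id t).const_mul c)
      simpa [mul_comm, Function.comp_def] using this
    have := h1.mul (hd t ht)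
    refine this.congr_deriv ?_
    ring
  have hmono : MonotoneOn g (Set.Ici (0:ℝ)) := by
    apply monotoneOn_of_deriv_nonneg (convex_Ici 0)
    · exact fun t ht => ((hgderiv t ht).continuousAt).continuousWithinAt
    · intro t ht
      rw [interior_Ici] at ht
      exact ((hgderiv t (le_of_lt ht)).differentiableAt).differentiableWithinAt
    · intro t ht
      rw [interior_Ici] at ht
      rw [(hgderiv t (le_of_lt ht)).deriv]
      exact mul_nonneg (Real.exp_pos _).le (hineq t (le_of_lt ht))
  intro t ht
  have : g 0 ≤ g t := hmono (Set.self_mem_Ici) ht ht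
  have hg0 : g 0 = f 0 := by simp [hg]
  have hgt : 0 ≤ g t := by rw [hg0] at this; linarith
  have hexp : 0 < Real.exp (c * t) := Real.exp_pos _
  have hgt' : 0 ≤ Real.exp (c * t) * f t := hgt
  nlinarith [hgt', hexp]

theorem stmt_1 (h h' h'' : ℝ → ℝ) (p₁ p₂ : ℝ)
    (hp₁ : 0 < p₁) (hp₂ : 0 < p₂)
    (hd : ∀ t ≥ (0:ℝ), HasDerivAt h (h' t) t)
    (hd' : ∀ t ≥ (0:ℝ), HasDerivAt h' (h'' t) t)
    (h0 : h 0 ≥ 0)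
    (hp₁cond : 0 < h 0 → p₁ > -(h' 0) / h 0)
    (hv : ∀ t ≥ (0:ℝ), (h'' t + p₁ * h' t) + p₂ * (h' t + p₁ * h t) ≥ 0)
    (hv0 : h' 0 + p₁ * h 0 > 0) :
    ∀ t ≥ (0:ℝ), h t ≥ 0 := by
  have hvnn : ∀ t ≥ (0:ℝ), h' t + p₁ * h t ≥ 0 := by
    apply aux_gronwall (fun t => h' t + p₁ * h t) (fun t => h'' t + p₁ * h' t) p₂
    · intro t ht
      exact (hd' t ht).add ((hd t ht).const_mul p₁)
    · linarith
    · exact hv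
  apply aux_gronwall h h' p₁ hd h0
  intro t ht
  have := hvnn t ht
  linarith
end

section
/- Let h be twice differentiable on [0,∞) with h(0) > 0. If p₁ > 0, p₁ > −h'(0)/h(0), p₂ > 0, p₂ > −(h''(0) + p₁h'(0))/(h'(0) + p₁h(0)), and h''(t) + (p₁+p₂)h'(t) + p₁p₂·h(t) ≥ 0 for all t ≥ 0, then h(t) > 0 for all t ≥ 0. -/
lemma mono_aux (f f' : ℝ → ℝ)
    (hf : ∀ t ≥ (0:ℝ), HasDerivAt f (f' t) t)
    (hf' : ∀ t ≥ (0:ℝ), 0 ≤ f' t) :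
    ∀ t ≥ (0:ℝ), f 0 ≤ f t := by
  have hm : MonotoneOn f (Set.Ici (0:ℝ)) := by
    apply monotoneOn_of_deriv_nonneg (convex_Ici 0)
    · exact fun t ht => (hf t ht).continuousAt.continuousWithinAt
    · intro t ht
      rw [interior_Ici] at ht
      exact ((hf t (le_of_lt ht)).differentiableAt).differentiableWithinAt
    · intro t ht
      rw [interior_Ici] at ht
      rw [(hf t (le_of_lt ht)).deriv]
      exact hf' t (le_of_lt ht)
  exact fun t ht => hm Set.self_mem_Ici ht ht

theorem stmt_2 (h h' h'' : ℝ → ℝ) (p₁ p₂ : ℝ)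
    (hd : ∀ t ≥ (0:ℝ), HasDerivAt h (h' t) t)
    (hd' : ∀ t ≥ (0:ℝ), HasDerivAt h' (h'' t) t)
    (h0 : 0 < h 0)
    (hp₁ : 0 < p₁) (hp₁' : p₁ > -(h' 0) / h 0)
    (hp₂ : 0 < p₂) (hp₂' : p₂ > -(h'' 0 + p₁ * h' 0) / (h' 0 + p₁ * h 0))
    (hineq : ∀ t ≥ (0:ℝ), h'' t + (p₁ + p₂) * h' t + p₁ * p₂ * h t ≥ 0) :
    ∀ t ≥ (0:ℝ), 0 < h t := by
  set g : ℝ → ℝ := fun t => h' t + p₁ * h t with hg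
  have hg0 : 0 < g 0 := by
    have := (div_lt_iff₀ h0).mp hp₁'
    simp only [hg]; linarith
  have hgd : ∀ t ≥ (0:ℝ), HasDerivAt g (h'' t + p₁ * h' t) t := by
    intro t ht
    exact (hd' t ht).add ((hd t ht).const_mul p₁)
  -- F t = exp (p₂ t) * g t is monotone
  have hFd : ∀ t ≥ (0:ℝ), HasDerivAt (fun t => Real.exp (p₂ * t) * g t)
      (p₂ * Real.exp (p₂ * t) * g t + Real.exp (p₂ * t) * (h'' t + p₁ * h' t)) t := by
    intro t ht
    have he : HasDerivAt (fun t => Real.exp (p₂ * t)) (p₂ * Real.exp (p₂ * t)) t := by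
      have := (HasDerivAt.exp ((hasDerivAt_id t).const_mul p₂))
      simpa [mul_comm] using this
    exact he.mul (hgd t ht)
  have hgpos : ∀ t ≥ (0:ℝ), 0 < g t := by
    intro t ht
    have hmono := mono_aux (fun t => Real.exp (p₂ * t) * g t) _ hFd
      (fun t ht => by
        have h1 := hineq t ht
        have h2 : (0:ℝ) < Real.exp (p₂ * t) := Real.exp_pos _
        have : p₂ * Real.exp (p₂ * t) * g t + Real.exp (p₂ * t) * (h'' t + p₁ * h' t)
            = Real.exp (p₂ * t) * (h'' t + (p₁ + p₂) * h' t + p₁ * p₂ * h t) := by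
          simp only [hg]; ring
        rw [this]
        positivity) t ht
    simp only [mul_zero, Real.exp_zero, one_mul] at hmono
    have h2 : (0:ℝ) < Real.exp (p₂ * t) := Real.exp_pos _
    nlinarith
  -- G t = exp (p₁ t) * h t is monotone
  intro t ht
  have hGd : ∀ t ≥ (0:ℝ), HasDerivAt (fun t => Real.exp (p₁ * t) * h t)
      (p₁ * Real.exp (p₁ * t) * h t + Real.exp (p₁ * t) * h' t) t := by
    intro t ht
    have he : HasDerivAt (fun t => Real.exp (p₁ * t)) (p₁ * Real.exp (p₁ * t)) t := by
      have := (HasDerivAt.exp ((hasDerivAt_id t).const_mul p₁))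
      simpa [mul_comm] using this
    exact he.mul (hd t ht)
  have hmono := mono_aux (fun t => Real.exp (p₁ * t) * h t) _ hGd
    (fun t ht => by
      have h1 := hgpos t ht
      have h2 : (0:ℝ) < Real.exp (p₁ * t) := Real.exp_pos _
      simp only [hg] at h1
      nlinarith) t ht
  simp only [mul_zero, Real.exp_zero, one_mul] at hmono
  have h2 : (0:ℝ) < Real.exp (p₁ * t) := Real.exp_pos _
  nlinarith
end

section
/- For x_S, x_D ∈ ℝ², x_S ≠ x_D, and k_D > 0, the Jacobian with respect to x_D of the map x_D ↦ k_D·(x_S − x_D)/‖x_S − x_D‖³ has determinant equal to −2k_D²/‖x_D − x_S‖⁶, which is nonzero. -/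
/-- The dog-repulsion force field felt by a sheep at `xS` from a dog at `xD`. -/
noncomputable def repulsion (kD : ℝ) (xS xD : EuclideanSpace ℝ (Fin 2)) :
    EuclideanSpace ℝ (Fin 2) :=
  kD • (‖xS - xD‖ ^ 3)⁻¹ • (xS - xD)

/-- The explicit derivative of the repulsion field. -/
theorem repulsion_fderiv (kD : ℝ) (xS xD : EuclideanSpace ℝ (Fin 2)) (hne : xS ≠ xD) :
    fderiv ℝ (fun y : EuclideanSpace ℝ (Fin 2) => repulsion kD xS y) xD
      = (3*kD*(‖xS - xD‖^5)⁻¹) • ((innerSL ℝ (xS - xD)).smulRight (xS - xD))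
      + (-(kD*(‖xS - xD‖^3)⁻¹)) • ContinuousLinearMap.id ℝ (EuclideanSpace ℝ (Fin 2)) := by
  have hv : xS - xD ≠ 0 := sub_ne_zero.mpr hne
  have hr : (0:ℝ) < ‖xS - xD‖ := norm_pos_iff.mpr hv
  have hr0 : ‖xS - xD‖ ≠ 0 := ne_of_gt hr
  have hA : HasFDerivAt (fun y : EuclideanSpace ℝ (Fin 2) => xS - y)
      (-(ContinuousLinearMap.id ℝ (EuclideanSpace ℝ (Fin 2)))) xD :=
    (hasFDerivAt_id xD).const_sub xS
  have hq := hA.norm_sq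
  have hq0 : ‖xS - xD‖^2 ≠ 0 := by positivity
  have hs := hq.sqrt hq0
  have hm := hq.mul hs
  have hmne : ‖xS - xD‖^2 * Real.sqrt (‖xS - xD‖^2) ≠ 0 := by
    rw [Real.sqrt_sq (norm_nonneg _)]; positivity
  have hc := (hasDerivAt_inv hmne).comp_hasFDerivAt xD hm
  have hg := hc.smul hA
  have hf0 := hg.const_smul kD
  have heqf : (fun y : EuclideanSpace ℝ (Fin 2) => repulsion kD xS y)
      =ᶠ[nhds xD] (fun y => kD • (((fun t : ℝ => t⁻¹) ∘
        fun y => ‖xS - y‖^2 * Real.sqrt (‖xS - y‖^2)) y • (xS - y))) := by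
    filter_upwards with y
    simp only [repulsion, Function.comp_apply, Real.sqrt_sq (norm_nonneg _)]
    match_scalars
    rw [← pow_succ]
    ring
  refine ((hf0.congr_of_eventuallyEq heqf).fderiv).trans ?_
  refine ContinuousLinearMap.ext fun h => ?_
  simp only [ContinuousLinearMap.add_apply, ContinuousLinearMap.coe_smul',
    Pi.smul_apply, ContinuousLinearMap.smulRight_apply, ContinuousLinearMap.comp_apply,
    ContinuousLinearMap.neg_apply, ContinuousLinearMap.id_apply, innerSL_apply_apply,
    Function.comp_apply, smul_eq_mul, inner_neg_right, Real.sqrt_sq (norm_nonneg _)]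
  simp only [nsmul_eq_mul, Nat.cast_ofNat]
  match_scalars
  all_goals field_simp
  all_goals try ring
  all_goals try exact Or.inl (pow_succ _ 2)
  all_goals try exact Or.inl trivial
  all_goals try (rw [← pow_succ]; ring)
  simp only [Pi.mul_apply]
  ring

theorem stmt_3 (kD : ℝ) (hkD : 0 < kD) (xS xD : EuclideanSpace ℝ (Fin 2))
    (hne : xS ≠ xD) :
    LinearMap.det ((fderiv ℝ (fun y : EuclideanSpace ℝ (Fin 2) => repulsion kD xS y) xD :
        EuclideanSpace ℝ (Fin 2) →L[ℝ] EuclideanSpace ℝ (Fin 2)) :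
        EuclideanSpace ℝ (Fin 2) →ₗ[ℝ] EuclideanSpace ℝ (Fin 2))
      = -2 * kD ^ 2 / ‖xD - xS‖ ^ 6 ∧
    (-2 * kD ^ 2 / ‖xD - xS‖ ^ 6 : ℝ) ≠ 0 := by
  have hv : xS - xD ≠ 0 := sub_ne_zero.mpr hne
  have hr : (0:ℝ) < ‖xS - xD‖ := norm_pos_iff.mpr hv
  have hr0 : ‖xS - xD‖ ≠ 0 := ne_of_gt hr
  have hnorm : ‖xD - xS‖ = ‖xS - xD‖ := norm_sub_rev _ _
  constructor
  · have hsum : (xS - xD) 0 * (xS - xD) 0 + (xS - xD) 1 * (xS - xD) 1 = ‖xS - xD‖^2 := by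
      have h2 := real_inner_self_eq_norm_sq (xS - xD)
      rw [← h2]
      simp only [PiLp.inner_apply, Fin.sum_univ_two, RCLike.inner_apply, conj_trivial, PiLp.sub_apply]
    rw [repulsion_fderiv kD xS xD hne]
    rw [← LinearMap.det_toMatrix ((EuclideanSpace.basisFun (Fin 2) ℝ).toBasis),
      Matrix.det_fin_two]
    simp only [LinearMap.toMatrix_apply, OrthonormalBasis.coe_toBasis,
      OrthonormalBasis.coe_toBasis_repr_apply, EuclideanSpace.basisFun_apply,
      EuclideanSpace.basisFun_repr, ContinuousLinearMap.coe_coe,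
      ContinuousLinearMap.add_apply, ContinuousLinearMap.coe_smul', Pi.smul_apply,
      ContinuousLinearMap.smulRight_apply, ContinuousLinearMap.id_apply, innerSL_apply_apply,
      EuclideanSpace.inner_single_right, smul_eq_mul,
      PiLp.add_apply, PiLp.smul_apply, EuclideanSpace.single_apply]
    have e0 : (xS - xD) 0 = xS 0 - xD 0 := rfl
    have e1 : (xS - xD) 1 = xS 1 - xD 1 := rfl
    rw [e0, e1] at hsum
    rw [hnorm]
    simp only [starRingEnd_apply, star_trivial, if_true, one_mul, mul_one,
      reduceIte, mul_zero, add_zero, show ((0:Fin 2) = 1) ↔ False by decide,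
      show ((1:Fin 2) = 0) ↔ False by decide, if_false]
    field_simp
    simp only [e0, e1]
    linear_combination (-3 * ‖xS - xD‖^2) * hsum
  · rw [hnorm]
    have h1 : (0:ℝ) < ‖xS - xD‖^6 := by positivity
    have h2 : -2 * kD^2 < 0 := by nlinarith
    exact ne_of_lt (div_neg_of_neg_of_pos h2 h1)
end

section
/- For x_S, x_D ∈ ℝ² with x_S ≠ x_D and any nonzero vector w ∈ ℝ², the row vector wᵀ·J, where J is the Jacobian in x_D of x_D ↦ k_D(x_S − x_D)/‖x_S − x_D‖³ with k_D > 0, is nonzero; hence the linear constraint wᵀ·J·u ≤ b on u ∈ ℝ² is feasible for every b ∈ ℝ. -/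
open scoped RealInnerProductSpace

lemma norm_cube_inv_eq (z : EuclideanSpace ℝ (Fin 2)) :
    (‖z‖ ^ 3)⁻¹ = (⟪z, z⟫) ^ (-(3/2) : ℝ) := by
  rw [real_inner_self_eq_norm_sq, ← Real.rpow_natCast ‖z‖ 2,
    ← Real.rpow_mul (norm_nonneg z),
    show ((2 : ℕ) : ℝ) * (-(3/2)) = -(3 : ℕ) by norm_num,
    Real.rpow_neg (norm_nonneg z), Real.rpow_natCast]

lemma norm_five_inv_eq (z : EuclideanSpace ℝ (Fin 2)) :
    (⟪z, z⟫) ^ ((-(3/2) : ℝ) - 1) = (‖z‖ ^ 5)⁻¹ := by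
  rw [real_inner_self_eq_norm_sq, ← Real.rpow_natCast ‖z‖ 2,
    ← Real.rpow_mul (norm_nonneg z),
    show ((2 : ℕ) : ℝ) * ((-(3/2)) - 1) = -(5 : ℕ) by norm_num,
    Real.rpow_neg (norm_nonneg z), Real.rpow_natCast]

lemma inner_fderiv (kD : ℝ) (xS xD : EuclideanSpace ℝ (Fin 2)) (hne : xS ≠ xD)
    (w u : EuclideanSpace ℝ (Fin 2)) :
    ⟪w, (fderiv ℝ (fun y : EuclideanSpace ℝ (Fin 2) => repulsion kD xS y) xD) u⟫ =
      kD * (-((‖xS - xD‖ ^ 3)⁻¹ * ⟪w, u⟫) +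
        3 * (‖xS - xD‖ ^ 5)⁻¹ * ⟪xS - xD, u⟫ * ⟪w, xS - xD⟫) := by
  have hs0 : xS - xD ≠ 0 := sub_ne_zero.mpr hne
  have hr : (0 : ℝ) < ‖xS - xD‖ := norm_pos_iff.mpr hs0
  have hq0 : (0 : ℝ) < ⟪xS - xD, xS - xD⟫ := by
    rw [real_inner_self_eq_norm_sq]; positivity
  have hv : HasFDerivAt (fun y : EuclideanSpace ℝ (Fin 2) => xS - y)
      (-(ContinuousLinearMap.id ℝ (EuclideanSpace ℝ (Fin 2)))) xD := by
    exact (hasFDerivAt_id (𝕜 := ℝ) xD).const_sub xS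
  have hq := hv.inner ℝ hv
  have hφ : HasDerivAt (fun t : ℝ => t ^ (-(3/2) : ℝ))
      (-(3/2) * (⟪xS - xD, xS - xD⟫) ^ ((-(3/2) : ℝ) - 1)) (⟪xS - xD, xS - xD⟫) :=
    Real.hasDerivAt_rpow_const (Or.inl (ne_of_gt hq0))
  have hcomp := hφ.comp_hasFDerivAt xD hq
  have heq : (fun y : EuclideanSpace ℝ (Fin 2) => (‖xS - y‖ ^ 3)⁻¹) =ᶠ[nhds xD]
      ((fun t : ℝ => t ^ (-(3/2) : ℝ)) ∘ fun t : EuclideanSpace ℝ (Fin 2) => ⟪xS - t, xS - t⟫) := by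
    filter_upwards with y
    exact norm_cube_inv_eq (xS - y)
  have hh := hcomp.congr_of_eventuallyEq heq
  have hsmul := (hh.smul hv).const_smul kD
  have hfd : fderiv ℝ (fun y : EuclideanSpace ℝ (Fin 2) => kD • ((‖xS - y‖ ^ 3)⁻¹ • (xS - y))) xD = _ :=
    hsmul.fderiv
  rw [show (fun y : EuclideanSpace ℝ (Fin 2) => repulsion kD xS y) =
      (fun y : EuclideanSpace ℝ (Fin 2) => kD • ((‖xS - y‖ ^ 3)⁻¹ • (xS - y)))
      from rfl, hfd]
  simp only [ContinuousLinearMap.smul_apply, ContinuousLinearMap.add_apply,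
    ContinuousLinearMap.smulRight_apply, ContinuousLinearMap.comp_apply,
    ContinuousLinearMap.prod_apply, ContinuousLinearMap.neg_apply,
    ContinuousLinearMap.id_apply, fderivInnerCLM_apply, norm_five_inv_eq]
  simp only [smul_eq_mul, inner_neg_left, inner_neg_right, real_inner_smul_right,
    inner_add_right, real_inner_comm (xS - xD) u]
  ring

theorem stmt_4 (kD : ℝ) (hkD : 0 < kD) (xS xD : EuclideanSpace ℝ (Fin 2))
    (hne : xS ≠ xD) (w : EuclideanSpace ℝ (Fin 2)) (hw : w ≠ 0) :
    (∃ u : EuclideanSpace ℝ (Fin 2),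
        ⟪w, (fderiv ℝ (fun y : EuclideanSpace ℝ (Fin 2) => repulsion kD xS y) xD) u⟫ ≠ 0) ∧
    ∀ b : ℝ, ∃ u : EuclideanSpace ℝ (Fin 2),
        ⟪w, (fderiv ℝ (fun y : EuclideanSpace ℝ (Fin 2) => repulsion kD xS y) xD) u⟫ ≤ b := by
  have hs0 : xS - xD ≠ 0 := sub_ne_zero.mpr hne
  have hr : (0 : ℝ) < ‖xS - xD‖ := norm_pos_iff.mpr hs0
  have key : ∃ u : EuclideanSpace ℝ (Fin 2),
      ⟪w, (fderiv ℝ (fun y : EuclideanSpace ℝ (Fin 2) => repulsion kD xS y) xD) u⟫ ≠ 0 := by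
    by_cases hws : ⟪w, xS - xD⟫ = 0
    · refine ⟨w, ?_⟩
      rw [inner_fderiv kD xS xD hne, hws, real_inner_comm w (xS - xD), hws]
      have hww : (0 : ℝ) < ⟪w, w⟫ := by
        rw [real_inner_self_eq_norm_sq]
        have : (0:ℝ) < ‖w‖ := norm_pos_iff.mpr hw
        positivity
      have h3 : (0 : ℝ) < (‖xS - xD‖ ^ 3)⁻¹ := by positivity
      simp only [mul_zero, zero_mul, add_zero]
      have hpos : 0 < kD * ((‖xS - xD‖ ^ 3)⁻¹ * ⟪w, w⟫) := by positivity
      intro h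
      nlinarith [hpos]
    · refine ⟨xS - xD, ?_⟩
      rw [inner_fderiv kD xS xD hne, real_inner_self_eq_norm_sq]
      have h1 : -((‖xS - xD‖ ^ 3)⁻¹ * ⟪w, xS - xD⟫) +
          3 * (‖xS - xD‖ ^ 5)⁻¹ * ‖xS - xD‖ ^ 2 * ⟪w, xS - xD⟫ =
          2 * (‖xS - xD‖ ^ 3)⁻¹ * ⟪w, xS - xD⟫ := by
        field_simp
        ring
      rw [h1]
      have h3 : ((‖xS - xD‖ : ℝ) ^ 3)⁻¹ ≠ 0 := by positivity
      exact mul_ne_zero (ne_of_gt hkD) (mul_ne_zero (mul_ne_zero two_ne_zero h3) hws)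
  refine ⟨key, ?_⟩
  obtain ⟨u, hu⟩ := key
  intro b
  refine ⟨(b / ⟪w, (fderiv ℝ (fun y : EuclideanSpace ℝ (Fin 2) => repulsion kD xS y) xD) u⟫) • u, ?_⟩
  rw [map_smul, inner_smul_right, div_mul_cancel₀ b hu]
end

section
/- For x, y ∈ ℝ² with x ≠ y, the Frobenius norm of the Jacobian with respect to x of the map x ↦ k_D·(y − x)/‖y − x‖³ (k_D > 0) is at most (3 + √2)·k_D/‖x − y‖³. -/
/-- Frobenius norm of a continuous linear map on `ℝ²`, via its matrix entries in the
standard Euclidean basis. -/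
noncomputable def frobNorm
    (L : EuclideanSpace ℝ (Fin 2) →L[ℝ] EuclideanSpace ℝ (Fin 2)) : ℝ :=
  Real.sqrt (∑ i : Fin 2, ∑ j : Fin 2, (L (EuclideanSpace.single j 1) i) ^ 2)

theorem stmt_9 (kD : ℝ) (hkD : 0 < kD) (x y : EuclideanSpace ℝ (Fin 2)) (hne : x ≠ y) :
    frobNorm (fderiv ℝ (fun z : EuclideanSpace ℝ (Fin 2) =>
        kD • (‖y - z‖ ^ 3)⁻¹ • (y - z)) x)
      ≤ (3 + Real.sqrt 2) * kD / ‖x - y‖ ^ 3 := by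
  set v : EuclideanSpace ℝ (Fin 2) := y - x with hv
  have hvne : v ≠ 0 := sub_ne_zero.mpr (Ne.symm hne)
  have hr : (0:ℝ) < ‖v‖ := norm_pos_iff.mpr hvne
  have hfun : (fun z : EuclideanSpace ℝ (Fin 2) => kD • (‖y - z‖ ^ 3)⁻¹ • (y - z))
      = fun z : EuclideanSpace ℝ (Fin 2) =>
        kD • ((‖y - z‖ ^ 2 : ℝ) ^ (-(3/2) : ℝ)) • (y - z) := by
    funext z
    congr 2
    rcases eq_or_ne (y - z) 0 with h | h
    · simp [h, Real.zero_rpow (by norm_num : (-(3/2):ℝ) ≠ 0)]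
    · have h0 : (0:ℝ) < ‖y - z‖ := norm_pos_iff.mpr h
      rw [← Real.rpow_natCast ‖y - z‖ 2, ← Real.rpow_natCast ‖y - z‖ 3,
        ← Real.rpow_mul h0.le, ← Real.rpow_neg h0.le]
      norm_num
  rw [hfun]
  have hu : HasFDerivAt (fun z : EuclideanSpace ℝ (Fin 2) => y - z)
      (-(ContinuousLinearMap.id ℝ (EuclideanSpace ℝ (Fin 2)))) x := by
    simpa using (hasFDerivAt_id x).const_sub y
  have hn : HasFDerivAt (fun z : EuclideanSpace ℝ (Fin 2) => ‖y - z‖ ^ 2)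
      (2 • (innerSL ℝ v).comp (-(ContinuousLinearMap.id ℝ (EuclideanSpace ℝ (Fin 2))))) x :=
    hu.norm_sq
  have hnx : ‖y - x‖ ^ 2 ≠ 0 := by rw [← hv]; positivity
  have hs : HasFDerivAt (fun z : EuclideanSpace ℝ (Fin 2) => (‖y - z‖ ^ 2 : ℝ) ^ (-(3/2) : ℝ))
      (((-(3/2) : ℝ) * (‖y - x‖ ^ 2 : ℝ) ^ ((-(3/2) : ℝ) - 1)) •
        (2 • (innerSL ℝ v).comp (-(ContinuousLinearMap.id ℝ (EuclideanSpace ℝ (Fin 2)))))) x :=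
    hn.rpow_const (Or.inl hnx)
  have hf : HasFDerivAt (fun z : EuclideanSpace ℝ (Fin 2) =>
      kD • ((‖y - z‖ ^ 2 : ℝ) ^ (-(3/2) : ℝ)) • (y - z)) _ x := (hs.smul hu).const_smul kD
  rw [hf.fderiv]
  -- rewrite rpow powers
  have ha : (‖y - x‖ ^ 2 : ℝ) ^ (-(3/2) : ℝ) = (‖v‖ ^ 3)⁻¹ := by
    rw [← hv, ← Real.rpow_natCast ‖v‖ 2, ← Real.rpow_mul hr.le,
      show ((2:ℕ):ℝ) * (-(3/2)) = ((-3 : ℤ) : ℝ) by push_cast; ring,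
      Real.rpow_intCast]
    simp only [zpow_neg]
    norm_cast
  have hb : (‖y - x‖ ^ 2 : ℝ) ^ ((-(3/2) : ℝ) - 1) = (‖v‖ ^ 5)⁻¹ := by
    rw [← hv, ← Real.rpow_natCast ‖v‖ 2, ← Real.rpow_mul hr.le,
      show ((2:ℕ):ℝ) * (-(3/2) - 1) = ((-5 : ℤ) : ℝ) by push_cast; ring,
      Real.rpow_intCast]
    simp only [zpow_neg]
    norm_cast
  rw [ha, hb]
  have h2 : v 0 ^ 2 + v 1 ^ 2 = ‖v‖ ^ 2 := by
    rw [EuclideanSpace.norm_eq, Real.sq_sqrt (by positivity)]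
    simp [Fin.sum_univ_two, sq_abs]
  have hxy : ‖x - y‖ = ‖v‖ := by rw [hv, norm_sub_rev]
  rw [hxy]
  unfold frobNorm
  rw [Fin.sum_univ_two, Fin.sum_univ_two, Fin.sum_univ_two]
  simp only [ContinuousLinearMap.smul_apply, ContinuousLinearMap.add_apply,
    ContinuousLinearMap.smulRight_apply, ContinuousLinearMap.comp_apply,
    ContinuousLinearMap.neg_apply, ContinuousLinearMap.id_apply, innerSL_apply_apply,
    PiLp.smul_apply, PiLp.add_apply, PiLp.neg_apply, smul_eq_mul,
    EuclideanSpace.inner_single_right, EuclideanSpace.single_apply]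
  norm_num [EuclideanSpace.inner_single_right, PiLp.inner_apply, Fin.sum_univ_two]

  have e0 : y 0 - x 0 = v 0 := rfl
  have e1 : y 1 - x 1 = v 1 := rfl
  rw [e0, e1]
  have hbq : (‖v‖ ^ 5)⁻¹ * (v 0 ^ 2 + v 1 ^ 2) = (‖v‖ ^ 3)⁻¹ := by
    rw [h2]
    field_simp
  refine le_trans (le_of_eq (congrArg Real.sqrt
      (?_ : _ = 5 * (kD * (‖v‖ ^ 3)⁻¹) ^ 2))) ?_
  · linear_combination
      (kD ^ 2 * (3 * (‖v‖ ^ 3)⁻¹ + 9 * ((‖v‖ ^ 5)⁻¹ * (v 0 ^ 2 + v 1 ^ 2)))) * hbq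
  · rw [Real.sqrt_mul (by norm_num : (0:ℝ) ≤ 5), Real.sqrt_sq (by positivity),
      div_eq_mul_inv, mul_assoc]
    have h53 : Real.sqrt 5 ≤ 3 + Real.sqrt 2 := by
      nlinarith [Real.sq_sqrt (by norm_num : (0:ℝ) ≤ 5), Real.sqrt_nonneg 5,
        Real.sqrt_nonneg 2]
    exact mul_le_mul_of_nonneg_right h53 (by positivity)
end

section
/- For x, y ∈ ℝ² with x ≠ y and k_S, R > 0, the Frobenius norm of the Jacobian with respect to y of the map y ↦ k_S(1 − R³/‖y − x‖³)(y − x) is at most √2·k_S + (3 + √2)·k_S·R³/‖x − y‖³. -/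
open scoped RealInnerProductSpace

lemma key_hasFDerivAt (kS R : ℝ) (x y : EuclideanSpace ℝ (Fin 2)) (hne : x ≠ y) :
    HasFDerivAt (fun z : EuclideanSpace ℝ (Fin 2) =>
        kS • (1 - R ^ 3 / ‖z - x‖ ^ 3) • (z - x))
      ((kS * (1 - R ^ 3 / ‖y - x‖ ^ 3)) • ContinuousLinearMap.id ℝ _ +
        (3 * kS * R ^ 3 / ‖y - x‖ ^ 5) •
          ((innerSL ℝ (y - x)).smulRight (y - x))) y := by
  have hv : y - x ≠ 0 := sub_ne_zero.mpr (Ne.symm hne)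
  have hr : (0:ℝ) < ‖y - x‖ := norm_pos_iff.mpr hv
  have hr3 : (‖y - x‖ ^ 3 : ℝ) ≠ 0 := by positivity
  have h1 : HasFDerivAt (fun z : EuclideanSpace ℝ (Fin 2) => z - x)
      (ContinuousLinearMap.id ℝ (EuclideanSpace ℝ (Fin 2))) y :=
    (hasFDerivAt_id y).sub_const x
  have h2 : HasFDerivAt (fun z : EuclideanSpace ℝ (Fin 2) => ‖z - x‖ ^ (3:ℝ))
      (((3:ℝ) * ‖y - x‖ ^ ((3:ℝ) - 2)) • innerSL ℝ (y - x)) y := by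
    have := (hasFDerivAt_norm_rpow (y - x) (p := 3) (by norm_num)).comp y h1
    simpa [Function.comp_def] using this
  have h2' : HasFDerivAt (fun z : EuclideanSpace ℝ (Fin 2) => ‖z - x‖ ^ (3:ℕ))
      (((3:ℝ) * ‖y - x‖ ^ ((3:ℝ) - 2)) • innerSL ℝ (y - x)) y := by
    have he : (fun z : EuclideanSpace ℝ (Fin 2) => ‖z - x‖ ^ (3:ℕ))
        = fun z : EuclideanSpace ℝ (Fin 2) => ‖z - x‖ ^ (3:ℝ) := by
      funext z
      rw [← Real.rpow_natCast ‖z - x‖ 3]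
      norm_num
    rw [he]; exact h2
  have hh : HasDerivAt (fun t : ℝ => 1 - R ^ 3 * t⁻¹)
      (-(R ^ 3 * -((‖y - x‖ ^ 3) ^ 2)⁻¹)) (‖y - x‖ ^ 3) :=
    ((hasDerivAt_inv hr3).const_mul (R ^ 3)).const_sub 1
  have hc : HasFDerivAt (fun z : EuclideanSpace ℝ (Fin 2) => 1 - R ^ 3 / ‖z - x‖ ^ 3)
      ((-(R ^ 3 * -((‖y - x‖ ^ 3) ^ 2)⁻¹)) •
        (((3:ℝ) * ‖y - x‖ ^ ((3:ℝ) - 2)) • innerSL ℝ (y - x))) y := by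
    have := hh.comp_hasFDerivAt y h2'
    simpa [Function.comp_def, div_eq_mul_inv] using this
  have hs := (hc.smul h1).const_smul kS
  refine hs.congr_fderiv ?_
  ext w i
  have h32 : ((3:ℝ) - 2) = 1 := by norm_num
  simp only [ContinuousLinearMap.add_apply, ContinuousLinearMap.smul_apply,
    ContinuousLinearMap.id_apply, ContinuousLinearMap.smulRight_apply,
    ContinuousLinearMap.coe_smul', Pi.smul_apply, h32, Real.rpow_one,
    innerSL_apply_apply]
  simp only [PiLp.add_apply, PiLp.smul_apply, smul_eq_mul]
  have hr5 : (‖y - x‖ ^ 5 : ℝ) ≠ 0 := by positivity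
  field_simp

theorem stmt_10 (kS R : ℝ) (hkS : 0 < kS) (hR : 0 < R)
    (x y : EuclideanSpace ℝ (Fin 2)) (hne : x ≠ y) :
    frobNorm (fderiv ℝ (fun z : EuclideanSpace ℝ (Fin 2) =>
        kS • (1 - R ^ 3 / ‖z - x‖ ^ 3) • (z - x)) y)
      ≤ Real.sqrt 2 * kS + (3 + Real.sqrt 2) * kS * R ^ 3 / ‖x - y‖ ^ 3 := by
  have hv : y - x ≠ 0 := sub_ne_zero.mpr (Ne.symm hne)
  have hr : (0:ℝ) < ‖y - x‖ := norm_pos_iff.mpr hv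
  rw [(key_hasFDerivAt kS R x y hne).fderiv]
  set v : EuclideanSpace ℝ (Fin 2) := y - x with hvdef
  set r : ℝ := ‖v‖ with hrdef
  set a : ℝ := kS * (1 - R ^ 3 / r ^ 3) with hadef
  set b : ℝ := 3 * kS * R ^ 3 / r ^ 5 with hbdef
  have hb : 0 ≤ b := by positivity
  -- compute entries
  have hentry : ∀ i j : Fin 2,
      ((a • ContinuousLinearMap.id ℝ (EuclideanSpace ℝ (Fin 2)) +
        b • ((innerSL ℝ v).smulRight v)) (EuclideanSpace.single j 1)) i
        = a * (if i = j then 1 else 0) + b * v j * v i := by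
    intro i j
    simp only [ContinuousLinearMap.add_apply, ContinuousLinearMap.smul_apply,
      ContinuousLinearMap.id_apply, ContinuousLinearMap.smulRight_apply, innerSL_apply_apply]
    simp only [PiLp.add_apply, PiLp.smul_apply, smul_eq_mul]
    rw [EuclideanSpace.inner_single_right]
    by_cases h : i = j <;> simp [EuclideanSpace.single_apply, h, eq_comm] <;> ring
  have hrsq : v 0 ^ 2 + v 1 ^ 2 = r ^ 2 := by
    rw [hrdef, EuclideanSpace.norm_eq, Real.sq_sqrt (by positivity)]
    simp [Fin.sum_univ_two, sq_abs]
  -- the sum of squares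
  have hS : (∑ i : Fin 2, ∑ j : Fin 2,
      (((a • ContinuousLinearMap.id ℝ (EuclideanSpace ℝ (Fin 2)) +
        b • ((innerSL ℝ v).smulRight v)) (EuclideanSpace.single j 1)) i) ^ 2)
      = 2 * a ^ 2 + 2 * a * b * r ^ 2 + b ^ 2 * r ^ 4 := by
    simp only [Fin.sum_univ_two, hentry]
    norm_num
    linear_combination (2 * a * b + b ^ 2 * (v 0 ^ 2 + v 1 ^ 2 + r ^ 2)) * hrsq
  unfold frobNorm
  rw [hS]
  have hs2 : (0:ℝ) ≤ Real.sqrt 2 := Real.sqrt_nonneg 2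
  have hs2sq : Real.sqrt 2 ^ 2 = 2 := Real.sq_sqrt (by norm_num)
  have hs2one : (1:ℝ) ≤ Real.sqrt 2 := by
    nlinarith [hs2sq, hs2]
  have habs : |a| ≥ a := le_abs_self a
  have habs0 : (0:ℝ) ≤ |a| := abs_nonneg a
  have hbound : 2 * a ^ 2 + 2 * a * b * r ^ 2 + b ^ 2 * r ^ 4
      ≤ (Real.sqrt 2 * |a| + b * r ^ 2) ^ 2 := by
    have hsq : a ^ 2 = |a| ^ 2 := (sq_abs a).symm
    nlinarith [mul_nonneg hb (sq_nonneg r), mul_nonneg habs0 (mul_nonneg hb (sq_nonneg r))]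
  have h1 : Real.sqrt (2 * a ^ 2 + 2 * a * b * r ^ 2 + b ^ 2 * r ^ 4)
      ≤ Real.sqrt 2 * |a| + b * r ^ 2 := by
    calc Real.sqrt (2 * a ^ 2 + 2 * a * b * r ^ 2 + b ^ 2 * r ^ 4)
        ≤ Real.sqrt ((Real.sqrt 2 * |a| + b * r ^ 2) ^ 2) := Real.sqrt_le_sqrt hbound
      _ = Real.sqrt 2 * |a| + b * r ^ 2 := Real.sqrt_sq (by positivity)
  refine h1.trans ?_
  have hxy : ‖x - y‖ = r := by rw [hrdef, hvdef, norm_sub_rev]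
  rw [hxy]
  have hbr : b * r ^ 2 = 3 * kS * R ^ 3 / r ^ 3 := by
    rw [hbdef]; field_simp
  have haa : |a| ≤ kS * (1 + R ^ 3 / r ^ 3) := by
    rw [hadef, abs_mul, abs_of_pos hkS]
    have : |1 - R ^ 3 / r ^ 3| ≤ 1 + R ^ 3 / r ^ 3 := by
      have h0 : (0:ℝ) ≤ R ^ 3 / r ^ 3 := by positivity
      rw [abs_le]
      constructor <;> linarith
    exact mul_le_mul_of_nonneg_left this hkS.le
  have ht : (0:ℝ) < R ^ 3 / r ^ 3 := by positivity
  calc Real.sqrt 2 * |a| + b * r ^ 2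
      ≤ Real.sqrt 2 * (kS * (1 + R ^ 3 / r ^ 3)) + 3 * kS * R ^ 3 / r ^ 3 := by
        rw [hbr]
        exact add_le_add_left (mul_le_mul_of_nonneg_left haa hs2) _
    _ = Real.sqrt 2 * kS + (3 + Real.sqrt 2) * kS * R ^ 3 / r ^ 3 := by
        field_simp; ring
end

section
/- Under the distance bounds L_S ≤ ‖x_{S_i} − x_{S_j}‖ ≤ M_S (i ≠ j), ‖x_{S_i} − x_{D_l}‖ ≥ L_D, ‖x_{S_i} − x_G‖ ≤ M_G, ‖x_{S_i} − x_P‖ ≤ M_P, and assuming ‖u_{D_l}‖ ≤ U_max for all dogs l and h(x_{S_i}) ≥ 0, the quantity b^H_i := f_iᵀf_i + (β/2)h + (x_{S_i} − x_P)ᵀ(Σ_j J^S_{ji} f_j + α f_i + Σ_{l≠k} J^D_{li} u_{D_l}) is bounded below by −(α + λ_M + (n−1)λ_S)·M_P·((n−1)F_max + k_G M_G + n k_D/L_D²) − (n−1)λ_D M_P U_max, where λ_S = √2 k_S + (3+√2)k_S R³/L_S³, λ_D = (3+√2)k_D/L_D³, λ_M = (n−1)k_S(√2 + (3+√2)R³/L_S³)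 + √2 k_G + n(3+√2)k_D/L_D³, and F_max = max(k_S L_S + k_S R³/L_S², k_S M_S + k_S R³/M_S²). In particular b^H_i is finite (bounded below). -/
open scoped RealInnerProductSpace

set_option maxHeartbeats 1000000

section Aux

variable {E : Type*} [NormedAddCommGroup E] [InnerProductSpace ℝ E]

lemma invcube_hasFDerivAt {z : E} (hz : z ≠ 0) :
    ∃ D : E →L[ℝ] E, HasFDerivAt (fun w : E => (‖w‖ ^ 3)⁻¹ • w) D z ∧ ‖D‖ ≤ 4 / ‖z‖ ^ 3 := by
  have hz0 : (0:ℝ) < ‖z‖ := norm_pos_iff.mpr hz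
  have h1 : HasFDerivAt (fun w : E => ‖w‖ ^ (3:ℝ)) ((3 * ‖z‖ ^ ((3:ℝ) - 2)) • innerSL ℝ z) z :=
    hasFDerivAt_norm_rpow z (by norm_num)
  have heq : (fun w : E => ‖w‖ ^ (3:ℝ)) = fun w : E => ‖w‖ ^ (3:ℕ) := by
    funext w; rw [show ((3:ℝ)) = ((3:ℕ):ℝ) by norm_num, Real.rpow_natCast]
  have h32 : ‖z‖ ^ ((3:ℝ) - 2) = ‖z‖ := by norm_num
  rw [heq, h32] at h1
  have hne : (‖z‖ ^ 3 : ℝ) ≠ 0 := by positivity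
  have h2 : HasFDerivAt (fun w : E => (‖w‖ ^ 3)⁻¹)
      ((-((‖z‖ ^ 3) ^ 2)⁻¹) • ((3 * ‖z‖) • innerSL ℝ z)) z :=
    (hasDerivAt_inv hne).comp_hasFDerivAt z h1
  have h3 := h2.smul (hasFDerivAt_id z)
  refine ⟨_, h3, ?_⟩
  apply ContinuousLinearMap.opNorm_le_bound _ (by positivity)
  intro v
  have hDv : (((‖z‖ ^ 3)⁻¹ • ContinuousLinearMap.id ℝ E +
      ((-((‖z‖ ^ 3) ^ 2)⁻¹) • ((3 * ‖z‖) • innerSL ℝ z)).smulRight (id z)) : E →L[ℝ] E) v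
      = (‖z‖ ^ 3)⁻¹ • v + ((-((‖z‖ ^ 3) ^ 2)⁻¹) * ((3 * ‖z‖) * ⟪z, v⟫)) • z := by
    simp only [ContinuousLinearMap.add_apply, ContinuousLinearMap.smul_apply,
      ContinuousLinearMap.smulRight_apply, ContinuousLinearMap.id_apply,
      ContinuousLinearMap.coe_smul', Pi.smul_apply, innerSL_apply_apply, id_eq, smul_smul,
      smul_eq_mul, mul_assoc]
  rw [hDv]
  have hCS : |⟪z, v⟫| ≤ ‖z‖ * ‖v‖ := abs_real_inner_le_norm z v
  calc ‖(‖z‖ ^ 3)⁻¹ • v + ((-((‖z‖ ^ 3) ^ 2)⁻¹) * ((3 * ‖z‖) * ⟪z, v⟫)) • z‖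
      ≤ ‖(‖z‖ ^ 3)⁻¹ • v‖ + ‖((-((‖z‖ ^ 3) ^ 2)⁻¹) * ((3 * ‖z‖) * ⟪z, v⟫)) • z‖ :=
        norm_add_le _ _
    _ ≤ (‖z‖ ^ 3)⁻¹ * ‖v‖ + ((‖z‖ ^ 3) ^ 2)⁻¹ * ((3 * ‖z‖) * (‖z‖ * ‖v‖)) * ‖z‖ := by
        rw [norm_smul, norm_smul]
        simp only [Real.norm_eq_abs, abs_mul, abs_neg, abs_inv, abs_pow, abs_norm]
        norm_num
        gcongr
    _ = 4 / ‖z‖ ^ 3 * ‖v‖ := by field_simp; ring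

/-- Derivative bound for `w ↦ a • (w - c) + b • (‖w-c‖³)⁻¹ • (w - c)`. -/
lemma termA_hasFDerivAt (a b : ℝ) (c : E) {y : E} (h : y - c ≠ 0) :
    ∃ D : E →L[ℝ] E, HasFDerivAt
      (fun w : E => a • (w - c) + b • (‖w - c‖ ^ 3)⁻¹ • (w - c)) D y ∧
      ‖D‖ ≤ |a| + 4 * |b| / ‖y - c‖ ^ 3 := by
  obtain ⟨D0, hD0, hn0⟩ := invcube_hasFDerivAt h
  have hg : HasFDerivAt (fun w : E => w - c) (ContinuousLinearMap.id ℝ E) y :=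
    (hasFDerivAt_id y).sub_const c
  have hinv : HasFDerivAt (fun w : E => (‖w - c‖ ^ 3)⁻¹ • (w - c))
      (D0.comp (ContinuousLinearMap.id ℝ E)) y := by have := hD0.comp y hg; exact this
  have hD : HasFDerivAt (fun w : E => a • (w - c) + b • (‖w - c‖ ^ 3)⁻¹ • (w - c))
      (a • ContinuousLinearMap.id ℝ E + b • D0.comp (ContinuousLinearMap.id ℝ E)) y :=
    (hg.const_smul a).add (hinv.const_smul b)
  refine ⟨_, hD, ?_⟩
  calc ‖a • ContinuousLinearMap.id ℝ E + b • D0.comp (ContinuousLinearMap.id ℝ E)‖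
      ≤ ‖a • ContinuousLinearMap.id ℝ E‖ + ‖b • D0.comp (ContinuousLinearMap.id ℝ E)‖ :=
        norm_add_le _ _
    _ ≤ |a| * 1 + |b| * (4 / ‖y - c‖ ^ 3) := by
        rw [ContinuousLinearMap.comp_id, norm_smul a (ContinuousLinearMap.id ℝ E),
          norm_smul b D0, Real.norm_eq_abs, Real.norm_eq_abs]
        gcongr
        · exact ContinuousLinearMap.norm_id_le
    _ = |a| + 4 * |b| / ‖y - c‖ ^ 3 := by ring

/-- Derivative bound for `w ↦ a • (c - w) + b • (‖c-w‖³)⁻¹ • (c - w)`. -/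
lemma termB_hasFDerivAt (a b : ℝ) (c : E) {y : E} (h : c - y ≠ 0) :
    ∃ D : E →L[ℝ] E, HasFDerivAt
      (fun w : E => a • (c - w) + b • (‖c - w‖ ^ 3)⁻¹ • (c - w)) D y ∧
      ‖D‖ ≤ |a| + 4 * |b| / ‖c - y‖ ^ 3 := by
  obtain ⟨D0, hD0, hn0⟩ := invcube_hasFDerivAt h
  have hg : HasFDerivAt (fun w : E => c - w) (-ContinuousLinearMap.id ℝ E) y := by
    simpa using (hasFDerivAt_id y).const_sub c
  have hinv : HasFDerivAt (fun w : E => (‖c - w‖ ^ 3)⁻¹ • (c - w))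
      (D0.comp (-ContinuousLinearMap.id ℝ E)) y := hD0.comp y hg
  have hD : HasFDerivAt (fun w : E => a • (c - w) + b • (‖c - w‖ ^ 3)⁻¹ • (c - w))
      (a • (-ContinuousLinearMap.id ℝ E) + b • D0.comp (-ContinuousLinearMap.id ℝ E)) y :=
    (hg.const_smul a).add (hinv.const_smul b)
  refine ⟨_, hD, ?_⟩
  have hid : ‖(-ContinuousLinearMap.id ℝ E : E →L[ℝ] E)‖ ≤ 1 := by
    rw [norm_neg]; exact ContinuousLinearMap.norm_id_le
  calc ‖a • (-ContinuousLinearMap.id ℝ E) + b • D0.comp (-ContinuousLinearMap.id ℝ E)‖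
      ≤ ‖a • (-ContinuousLinearMap.id ℝ E)‖ + ‖b • D0.comp (-ContinuousLinearMap.id ℝ E)‖ :=
        norm_add_le _ _
    _ ≤ |a| * 1 + |b| * (4 / ‖c - y‖ ^ 3 * 1) := by
        rw [norm_smul a (-ContinuousLinearMap.id ℝ E),
          norm_smul b (D0.comp (-ContinuousLinearMap.id ℝ E)), Real.norm_eq_abs,
          Real.norm_eq_abs]
        gcongr
        · calc ‖D0.comp (-ContinuousLinearMap.id ℝ E)‖
              ≤ ‖D0‖ * ‖(-ContinuousLinearMap.id ℝ E : E →L[ℝ] E)‖ :=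
              ContinuousLinearMap.opNorm_comp_le _ _
          _ ≤ 4 / ‖c - y‖ ^ 3 * 1 := by
              have h1 : (0:ℝ) < ‖c - y‖ := norm_pos_iff.mpr h
              have := ContinuousLinearMap.norm_id_le (𝕜 := ℝ) (E := E)
              have h2 : ‖(-ContinuousLinearMap.id ℝ E : E →L[ℝ] E)‖ ≤ 1 := by
                rw [norm_neg]; exact this
              have h3 : (0:ℝ) ≤ ‖D0‖ := norm_nonneg _
              nlinarith [norm_nonneg (-ContinuousLinearMap.id ℝ E : E →L[ℝ] E)]
    _ = |a| + 4 * |b| / ‖c - y‖ ^ 3 := by ring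

lemma sheep_smul_eq (kS R : ℝ) (z : E) :
    kS • (1 - R ^ 3 / ‖z‖ ^ 3) • z = kS • z + (-(kS * R ^ 3)) • (‖z‖ ^ 3)⁻¹ • z := by
  rw [smul_smul, smul_smul, ← add_smul]
  congr 1
  ring

lemma convex_aux {R LS MS d : ℝ} (hR : 0 < R) (hLS : 0 < LS) (h1 : LS ≤ d) (h2 : d ≤ MS) :
    d + R ^ 3 / d ^ 2 ≤ max (LS + R ^ 3 / LS ^ 2) (MS + R ^ 3 / MS ^ 2) := by
  have hd : 0 < d := hLS.trans_le h1
  have hMS : 0 < MS := hd.trans_le h2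
  rcases le_or_gt (d + R ^ 3 / d ^ 2) (MS + R ^ 3 / MS ^ 2) with h | h
  · exact le_max_of_le_right h
  · apply le_max_of_le_left
    have key : d ^ 2 * MS ^ 2 < R ^ 3 * (MS + d) := by
      have h' := mul_lt_mul_of_pos_left h (show (0:ℝ) < d ^ 2 * MS ^ 2 by positivity)
      rw [mul_add, mul_add, mul_div_assoc', mul_div_assoc'] at h'
      rw [show d ^ 2 * MS ^ 2 * R ^ 3 / MS ^ 2 = d ^ 2 * R ^ 3 by field_simp,
        show d ^ 2 * MS ^ 2 * R ^ 3 / d ^ 2 = MS ^ 2 * R ^ 3 by field_simp] at h'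
      nlinarith [h']
    have hMSLS : LS ≤ MS := h1.trans h2
    have e0 : (MS + d) * LS ^ 2 ≤ (d + LS) * MS ^ 2 := by
      nlinarith [mul_nonneg hd.le (sub_nonneg.mpr (mul_le_mul hMSLS hMSLS hLS.le hMS.le)),
        mul_nonneg (mul_nonneg hLS.le hMS.le) (sub_nonneg.mpr hMSLS)]
    have e1 : R ^ 3 * ((MS + d) * LS ^ 2) ≤ R ^ 3 * ((d + LS) * MS ^ 2) :=
      mul_le_mul_of_nonneg_left e0 (by positivity)
    have e2 : d ^ 2 * MS ^ 2 * LS ^ 2 < R ^ 3 * ((MS + d) * LS ^ 2) := by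
      rw [← mul_assoc]
      exact mul_lt_mul_of_pos_right key (by positivity)
    have hkey2 : d ^ 2 * LS ^ 2 < R ^ 3 * (d + LS) := by
      have h3 : (d ^ 2 * LS ^ 2) * MS ^ 2 < (R ^ 3 * (d + LS)) * MS ^ 2 := by
        calc (d ^ 2 * LS ^ 2) * MS ^ 2 = d ^ 2 * MS ^ 2 * LS ^ 2 := by ring
          _ < R ^ 3 * ((MS + d) * LS ^ 2) := e2
          _ ≤ R ^ 3 * ((d + LS) * MS ^ 2) := e1
          _ = (R ^ 3 * (d + LS)) * MS ^ 2 := by ring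
      exact lt_of_mul_lt_mul_right h3 (by positivity)
    rw [← sub_nonneg]
    have expand : (LS + R ^ 3 / LS ^ 2) - (d + R ^ 3 / d ^ 2)
        = ((d - LS) * (R ^ 3 * (d + LS) - d ^ 2 * LS ^ 2)) / (d ^ 2 * LS ^ 2) := by
      field_simp
      ring
    rw [expand]
    apply div_nonneg _ (by positivity)
    exact mul_nonneg (sub_nonneg.mpr h1) (sub_nonneg.mpr hkey2.le)

end Aux

/-- Reynolds–Boids dynamics of sheep `i`: inter-sheep cohesion/repulsion, attraction to the
goal `xG`, and repulsion from the dogs. -/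
noncomputable def sheepDyn (kS kG kD R : ℝ) (xG : EuclideanSpace ℝ (Fin 2)) {n : ℕ}
    (xS xD : Fin n → EuclideanSpace ℝ (Fin 2)) (i : Fin n) : EuclideanSpace ℝ (Fin 2) :=
  (∑ j ∈ Finset.univ.erase i, kS • (1 - R ^ 3 / ‖xS j - xS i‖ ^ 3) • (xS j - xS i))
    + kG • (xG - xS i)
    + ∑ l, kD • (‖xS i - xD l‖ ^ 3)⁻¹ • (xS i - xD l)

section Bounds

lemma fnorm_bound {n : ℕ} (kS kG kD R LS MS MG LD : ℝ)
    (hkS : 0 < kS) (hkG : 0 < kG) (hkD : 0 < kD) (hR : 0 < R) (hLS : 0 < LS) (hLD : 0 < LD)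
    (xG : EuclideanSpace ℝ (Fin 2)) (xS xD : Fin n → EuclideanSpace ℝ (Fin 2)) (j : Fin n)
    (hSS : ∀ j' : Fin n, j' ≠ j → LS ≤ ‖xS j' - xS j‖ ∧ ‖xS j' - xS j‖ ≤ MS)
    (hSD : ∀ l, LD ≤ ‖xS j - xD l‖) (hMG : ‖xS j - xG‖ ≤ MG) :
    ‖sheepDyn kS kG kD R xG xS xD j‖ ≤
      ((Finset.univ.erase j).card : ℝ) *
        max (kS * LS + kS * R ^ 3 / LS ^ 2) (kS * MS + kS * R ^ 3 / MS ^ 2)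
      + kG * MG + (n : ℝ) * (kD / LD ^ 2) := by
  have hterm1 : ∀ j' ∈ Finset.univ.erase j,
      ‖kS • (1 - R ^ 3 / ‖xS j' - xS j‖ ^ 3) • (xS j' - xS j)‖ ≤
        max (kS * LS + kS * R ^ 3 / LS ^ 2) (kS * MS + kS * R ^ 3 / MS ^ 2) := by
    intro j' hj'
    obtain ⟨hd1, hd2⟩ := hSS j' (Finset.ne_of_mem_erase hj')
    set d := ‖xS j' - xS j‖ with hdd
    have hd0 : 0 < d := hLS.trans_le hd1
    rw [norm_smul, norm_smul, Real.norm_eq_abs, Real.norm_eq_abs, abs_of_pos hkS, ← hdd]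
    have habs : |1 - R ^ 3 / d ^ 3| ≤ 1 + R ^ 3 / d ^ 3 := by
      have hx : (0:ℝ) ≤ R ^ 3 / d ^ 3 := by positivity
      rw [abs_le]
      constructor <;> nlinarith
    calc kS * (|1 - R ^ 3 / d ^ 3| * d) ≤ kS * ((1 + R ^ 3 / d ^ 3) * d) := by
          have := mul_le_mul_of_nonneg_right habs hd0.le
          nlinarith
      _ = kS * (d + R ^ 3 / d ^ 2) := by
          congr 1
          field_simp
      _ ≤ kS * max (LS + R ^ 3 / LS ^ 2) (MS + R ^ 3 / MS ^ 2) :=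
          mul_le_mul_of_nonneg_left (convex_aux hR hLS hd1 hd2) hkS.le
      _ = max (kS * LS + kS * R ^ 3 / LS ^ 2) (kS * MS + kS * R ^ 3 / MS ^ 2) := by
          rw [mul_max_of_nonneg _ _ hkS.le]
          congr 1 <;> ring
  have hterm3 : ∀ l : Fin n, ‖kD • (‖xS j - xD l‖ ^ 3)⁻¹ • (xS j - xD l)‖ ≤ kD / LD ^ 2 := by
    intro l
    have hd1 := hSD l
    set d := ‖xS j - xD l‖ with hdd
    have hd0 : 0 < d := hLD.trans_le hd1
    rw [norm_smul, norm_smul, Real.norm_eq_abs, Real.norm_eq_abs, abs_of_pos hkD, abs_inv,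
      abs_of_pos (show (0:ℝ) < d ^ 3 by positivity), ← hdd]
    calc kD * ((d ^ 3)⁻¹ * d) = kD / d ^ 2 := by field_simp
      _ ≤ kD / LD ^ 2 := by
          apply div_le_div_of_nonneg_left hkD.le (by positivity)
          exact pow_le_pow_left₀ hLD.le hd1 2
  calc ‖sheepDyn kS kG kD R xG xS xD j‖
      ≤ ‖∑ j' ∈ Finset.univ.erase j, kS • (1 - R ^ 3 / ‖xS j' - xS j‖ ^ 3) • (xS j' - xS j)‖
        + ‖kG • (xG - xS j)‖
        + ‖∑ l, kD • (‖xS j - xD l‖ ^ 3)⁻¹ • (xS j - xD l)‖ := norm_add₃_le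
    _ ≤ ((Finset.univ.erase j).card : ℝ) *
          max (kS * LS + kS * R ^ 3 / LS ^ 2) (kS * MS + kS * R ^ 3 / MS ^ 2)
        + kG * MG + (n : ℝ) * (kD / LD ^ 2) := by
        have b1 : ‖∑ j' ∈ Finset.univ.erase j,
            kS • (1 - R ^ 3 / ‖xS j' - xS j‖ ^ 3) • (xS j' - xS j)‖ ≤
            ((Finset.univ.erase j).card : ℝ) *
              max (kS * LS + kS * R ^ 3 / LS ^ 2) (kS * MS + kS * R ^ 3 / MS ^ 2) := by
          refine (norm_sum_le _ _).trans ?_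
          have := Finset.sum_le_card_nsmul _ _ _ hterm1
          rwa [nsmul_eq_mul] at this
        have b2 : ‖kG • (xG - xS j)‖ ≤ kG * MG := by
          rw [norm_smul, Real.norm_eq_abs, abs_of_pos hkG, norm_sub_rev]
          exact mul_le_mul_of_nonneg_left hMG hkG.le
        have b3 : ‖∑ l, kD • (‖xS j - xD l‖ ^ 3)⁻¹ • (xS j - xD l)‖
            ≤ (n : ℝ) * (kD / LD ^ 2) := by
          refine (norm_sum_le _ _).trans ?_
          have := Finset.sum_le_card_nsmul Finset.univ _ _ (fun l _ => hterm3 l)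
          rwa [nsmul_eq_mul, Finset.card_univ, Fintype.card_fin] at this
        linarith

lemma JS_ne_bound {n : ℕ} (kS kG kD R LS : ℝ) (hLS : 0 < LS)
    (xG : EuclideanSpace ℝ (Fin 2)) (xS xD : Fin n → EuclideanSpace ℝ (Fin 2))
    (i j : Fin n) (hij : j ≠ i) (hd1 : LS ≤ ‖xS j - xS i‖) :
    ‖fderiv ℝ (fun y => sheepDyn kS kG kD R xG (Function.update xS j y) xD i) (xS j)‖
      ≤ |kS| + 4 * |kS * R ^ 3| / LS ^ 3 := by
  have hz : xS j - xS i ≠ 0 := by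
    intro h0
    rw [h0, norm_zero] at hd1
    linarith
  obtain ⟨D, hD, hn⟩ := termA_hasFDerivAt kS (-(kS * R ^ 3)) (xS i) hz
  have hjmem : j ∈ Finset.univ.erase i := Finset.mem_erase.mpr ⟨hij, Finset.mem_univ j⟩
  have hfun : (fun y => sheepDyn kS kG kD R xG (Function.update xS j y) xD i)
      = fun y => (kS • (y - xS i) + (-(kS * R ^ 3)) • (‖y - xS i‖ ^ 3)⁻¹ • (y - xS i))
        + ((∑ j' ∈ (Finset.univ.erase i).erase j,
              kS • (1 - R ^ 3 / ‖xS j' - xS i‖ ^ 3) • (xS j' - xS i))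
          + kG • (xG - xS i)
          + ∑ l, kD • (‖xS i - xD l‖ ^ 3)⁻¹ • (xS i - xD l)) := by
    funext y
    have hupd_i : Function.update xS j y i = xS i := Function.update_of_ne (Ne.symm hij) _ _
    have hupd_j : Function.update xS j y j = y := Function.update_self _ _ _
    simp only [sheepDyn, hupd_i]
    rw [← Finset.add_sum_erase _ _ hjmem, hupd_j,
      Finset.sum_congr rfl (fun j' hj' => by
        rw [Function.update_of_ne (Finset.ne_of_mem_erase hj') _ _]),
      sheep_smul_eq]
    abel
  rw [hfun]
  rw [(hD.add_const _).fderiv]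
  refine hn.trans ?_
  rw [abs_neg]
  have h4 : 4 * |kS * R ^ 3| / ‖xS j - xS i‖ ^ 3 ≤ 4 * |kS * R ^ 3| / LS ^ 3 :=
    div_le_div_of_nonneg_left (by positivity) (by positivity) (pow_le_pow_left₀ hLS.le hd1 3)
  linarith

lemma JD_bound {n : ℕ} (kS kG kD R LD : ℝ) (hLD : 0 < LD)
    (xG : EuclideanSpace ℝ (Fin 2)) (xS xD : Fin n → EuclideanSpace ℝ (Fin 2))
    (i l : Fin n) (hd1 : LD ≤ ‖xS i - xD l‖) :
    ‖fderiv ℝ (fun y => sheepDyn kS kG kD R xG xS (Function.update xD l y) i) (xD l)‖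
      ≤ 4 * |kD| / LD ^ 3 := by
  have hz : xS i - xD l ≠ 0 := by
    intro h0; rw [h0, norm_zero] at hd1; linarith
  obtain ⟨D, hD, hn⟩ := termB_hasFDerivAt (0:ℝ) kD (xS i) hz
  have hfun : (fun y => sheepDyn kS kG kD R xG xS (Function.update xD l y) i)
      = fun y => ((0:ℝ) • (xS i - y) + kD • (‖xS i - y‖ ^ 3)⁻¹ • (xS i - y))
        + (((∑ j' ∈ Finset.univ.erase i,
              kS • (1 - R ^ 3 / ‖xS j' - xS i‖ ^ 3) • (xS j' - xS i))
          + kG • (xG - xS i))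
          + ∑ l' ∈ Finset.univ.erase l, kD • (‖xS i - xD l'‖ ^ 3)⁻¹ • (xS i - xD l')) := by
    funext y
    have hdog : (∑ l', kD • (‖xS i - Function.update xD l y l'‖ ^ 3)⁻¹ •
          (xS i - Function.update xD l y l'))
        = (kD • (‖xS i - y‖ ^ 3)⁻¹ • (xS i - y))
          + ∑ l' ∈ Finset.univ.erase l, kD • (‖xS i - xD l'‖ ^ 3)⁻¹ • (xS i - xD l') := by
      rw [← Finset.add_sum_erase _ _ (Finset.mem_univ l), Function.update_self]
      congr 1
      exact Finset.sum_congr rfl fun l' hl' => by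
        rw [Function.update_of_ne (Finset.ne_of_mem_erase hl') _ _]
    simp only [sheepDyn, hdog]
    rw [zero_smul, zero_add]
    abel
  rw [hfun, (hD.add_const _).fderiv]
  refine hn.trans ?_
  rw [abs_zero]
  have h4 : 4 * |kD| / ‖xS i - xD l‖ ^ 3 ≤ 4 * |kD| / LD ^ 3 :=
    div_le_div_of_nonneg_left (by positivity) (by positivity) (pow_le_pow_left₀ hLD.le hd1 3)
  linarith

lemma JS_eq_bound {n : ℕ} (kS kG kD R LS LD : ℝ) (hLS : 0 < LS) (hLD : 0 < LD)
    (xG : EuclideanSpace ℝ (Fin 2)) (xS xD : Fin n → EuclideanSpace ℝ (Fin 2)) (i : Fin n)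
    (hSS : ∀ j' : Fin n, j' ≠ i → LS ≤ ‖xS j' - xS i‖)
    (hSD : ∀ l, LD ≤ ‖xS i - xD l‖) :
    ‖fderiv ℝ (fun y => sheepDyn kS kG kD R xG (Function.update xS i y) xD i) (xS i)‖
      ≤ ((Finset.univ.erase i).card : ℝ) * (|kS| + 4 * |kS * R ^ 3| / LS ^ 3)
        + |kG| + (n : ℝ) * (4 * |kD| / LD ^ 3) := by
  have h1 : ∀ j' ∈ Finset.univ.erase i, ∃ D : EuclideanSpace ℝ (Fin 2) →L[ℝ] _,
      HasFDerivAt (fun y => kS • (1 - R ^ 3 / ‖xS j' - y‖ ^ 3) • (xS j' - y)) D (xS i) ∧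
      ‖D‖ ≤ |kS| + 4 * |kS * R ^ 3| / LS ^ 3 := by
    intro j' hj'
    have hd1 := hSS j' (Finset.ne_of_mem_erase hj')
    have hz : xS j' - xS i ≠ 0 := by intro h0; rw [h0, norm_zero] at hd1; linarith
    obtain ⟨D, hD, hn⟩ := termB_hasFDerivAt kS (-(kS * R ^ 3)) (xS j') hz
    refine ⟨D, ?_, ?_⟩
    · have : (fun y => kS • (1 - R ^ 3 / ‖xS j' - y‖ ^ 3) • (xS j' - y))
          = fun y => kS • (xS j' - y) + (-(kS * R ^ 3)) • (‖xS j' - y‖ ^ 3)⁻¹ • (xS j' - y) :=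
        funext fun y => sheep_smul_eq kS R (xS j' - y)
      rw [this]; exact hD
    · refine hn.trans ?_
      rw [abs_neg]
      have h4 : 4 * |kS * R ^ 3| / ‖xS j' - xS i‖ ^ 3 ≤ 4 * |kS * R ^ 3| / LS ^ 3 :=
        div_le_div_of_nonneg_left (by positivity) (by positivity) (pow_le_pow_left₀ hLS.le hd1 3)
      linarith
  choose! D1 hD1 hn1 using h1
  have h2 : ∀ l : Fin n, ∃ D : EuclideanSpace ℝ (Fin 2) →L[ℝ] _,
      HasFDerivAt (fun y => kD • (‖y - xD l‖ ^ 3)⁻¹ • (y - xD l)) D (xS i) ∧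
      ‖D‖ ≤ 4 * |kD| / LD ^ 3 := by
    intro l
    have hd1 := hSD l
    have hz : xS i - xD l ≠ 0 := by intro h0; rw [h0, norm_zero] at hd1; linarith
    obtain ⟨D, hD, hn⟩ := termA_hasFDerivAt (0:ℝ) kD (xD l) hz
    refine ⟨D, ?_, ?_⟩
    · have : (fun y => kD • (‖y - xD l‖ ^ 3)⁻¹ • (y - xD l))
          = fun y => (0:ℝ) • (y - xD l) + kD • (‖y - xD l‖ ^ 3)⁻¹ • (y - xD l) := by
        funext y; rw [zero_smul, zero_add]
      rw [this]; exact hD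
    · refine hn.trans ?_
      rw [abs_zero]
      have h4 : 4 * |kD| / ‖xS i - xD l‖ ^ 3 ≤ 4 * |kD| / LD ^ 3 :=
        div_le_div_of_nonneg_left (by positivity) (by positivity) (pow_le_pow_left₀ hLD.le hd1 3)
      linarith
  choose D2 hD2 hn2 using h2
  have hG : HasFDerivAt (fun y : EuclideanSpace ℝ (Fin 2) => kG • (xG - y))
      (kG • (-ContinuousLinearMap.id ℝ (EuclideanSpace ℝ (Fin 2)))) (xS i) :=
    ((hasFDerivAt_id (xS i)).const_sub xG).const_smul kG
  have hfun : (fun y => sheepDyn kS kG kD R xG (Function.update xS i y) xD i)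
      = fun y => (∑ j' ∈ Finset.univ.erase i, kS • (1 - R ^ 3 / ‖xS j' - y‖ ^ 3) • (xS j' - y))
        + kG • (xG - y)
        + ∑ l, kD • (‖y - xD l‖ ^ 3)⁻¹ • (y - xD l) := by
    funext y
    simp only [sheepDyn, Function.update_self]
    congr 1
    congr 1
    exact Finset.sum_congr rfl fun j' hj' => by
      rw [Function.update_of_ne (Finset.ne_of_mem_erase hj') _ _]
  have hF : HasFDerivAt (fun y => sheepDyn kS kG kD R xG (Function.update xS i y) xD i)
      ((∑ j' ∈ Finset.univ.erase i, D1 j')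
        + kG • (-ContinuousLinearMap.id ℝ (EuclideanSpace ℝ (Fin 2)))
        + ∑ l, D2 l) (xS i) := by
    rw [hfun]
    exact ((HasFDerivAt.fun_sum fun j' hj' => hD1 j' hj').add hG).add
      (HasFDerivAt.fun_sum fun l _ => hD2 l)
  rw [hF.fderiv]
  have b1 : ‖∑ j' ∈ Finset.univ.erase i, D1 j'‖
      ≤ ((Finset.univ.erase i).card : ℝ) * (|kS| + 4 * |kS * R ^ 3| / LS ^ 3) := by
    refine (norm_sum_le _ _).trans ?_
    have := Finset.sum_le_card_nsmul _ _ _ (fun j' hj' => hn1 j' hj')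
    rwa [nsmul_eq_mul] at this
  have b2 : ‖kG • (-ContinuousLinearMap.id ℝ (EuclideanSpace ℝ (Fin 2)))‖ ≤ |kG| := by
    have e := norm_smul kG (-ContinuousLinearMap.id ℝ (EuclideanSpace ℝ (Fin 2)))
    rw [e, Real.norm_eq_abs, norm_neg]
    calc |kG| * ‖ContinuousLinearMap.id ℝ (EuclideanSpace ℝ (Fin 2))‖ ≤ |kG| * 1 :=
          mul_le_mul_of_nonneg_left ContinuousLinearMap.norm_id_le (abs_nonneg kG)
      _ = |kG| := mul_one _
  have b3 : ‖∑ l, D2 l‖ ≤ (n : ℝ) * (4 * |kD| / LD ^ 3) := by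
    refine (norm_sum_le _ _).trans ?_
    have := Finset.sum_le_card_nsmul Finset.univ _ _ (fun l (_ : l ∈ Finset.univ) => hn2 l)
    rwa [nsmul_eq_mul, Finset.card_univ, Fintype.card_fin] at this
  calc ‖(∑ j' ∈ Finset.univ.erase i, D1 j')
        + kG • (-ContinuousLinearMap.id ℝ (EuclideanSpace ℝ (Fin 2))) + ∑ l, D2 l‖
      ≤ ‖∑ j' ∈ Finset.univ.erase i, D1 j'‖
        + ‖kG • (-ContinuousLinearMap.id ℝ (EuclideanSpace ℝ (Fin 2)))‖ + ‖∑ l, D2 l‖ :=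
        norm_add₃_le
    _ ≤ _ := by linarith

end Bounds

theorem stmt_12 (n : ℕ) (kS kG kD R α β r Rp LS MS MG LD MP Umax : ℝ)
    (hkS : 0 < kS) (hkG : 0 < kG) (hkD : 0 < kD) (hR : 0 < R)
    (hα : 0 < α) (hβ : 0 < β) (hLS : 0 < LS) (hLD : 0 < LD)
    (xS xD : Fin n → EuclideanSpace ℝ (Fin 2))
    (xG xP : EuclideanSpace ℝ (Fin 2))
    (u : Fin n → EuclideanSpace ℝ (Fin 2))
    (i k : Fin n)
    (hSS : ∀ j j' : Fin n, j ≠ j' → LS ≤ ‖xS j - xS j'‖ ∧ ‖xS j - xS j'‖ ≤ MS)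
    (hSD : ∀ (j : Fin n) (l : Fin n), LD ≤ ‖xS j - xD l‖)
    (hSG : ∀ j : Fin n, ‖xS j - xG‖ ≤ MG)
    (hSP : ∀ j : Fin n, ‖xS j - xP‖ ≤ MP)
    (hU : ∀ l : Fin n, ‖u l‖ ≤ Umax)
    (hh : ‖xS i - xP‖ ^ 2 - (r + Rp) ^ 2 ≥ 0) :
    let f : Fin n → EuclideanSpace ℝ (Fin 2) := sheepDyn kS kG kD R xG xS xD
    let JS : Fin n → EuclideanSpace ℝ (Fin 2) →L[ℝ] EuclideanSpace ℝ (Fin 2) := fun j =>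
      fderiv ℝ (fun y => sheepDyn kS kG kD R xG (Function.update xS j y) xD i) (xS j)
    let JD : Fin n → EuclideanSpace ℝ (Fin 2) →L[ℝ] EuclideanSpace ℝ (Fin 2) := fun l =>
      fderiv ℝ (fun y => sheepDyn kS kG kD R xG xS (Function.update xD l y) i) (xD l)
    let bH : ℝ := ⟪f i, f i⟫ + (β / 2) * (‖xS i - xP‖ ^ 2 - (r + Rp) ^ 2) +
      ⟪xS i - xP,
        (∑ j, JS j (f j)) + α • f i + ∑ l ∈ Finset.univ.erase k, JD l (u l)⟫
    let lamS : ℝ := Real.sqrt 2 * kS + (3 + Real.sqrt 2) * kS * R ^ 3 / LS ^ 3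
    let lamD : ℝ := (3 + Real.sqrt 2) * kD / LD ^ 3
    let lamM : ℝ := ((n : ℝ) - 1) * kS * (Real.sqrt 2 + (3 + Real.sqrt 2) * R ^ 3 / LS ^ 3)
      + Real.sqrt 2 * kG + (n : ℝ) * (3 + Real.sqrt 2) * kD / LD ^ 3
    let Fmax : ℝ := max (kS * LS + kS * R ^ 3 / LS ^ 2) (kS * MS + kS * R ^ 3 / MS ^ 2)
    bH ≥ -(α + lamM + ((n : ℝ) - 1) * lamS) * MP *
          (((n : ℝ) - 1) * Fmax + kG * MG + (n : ℝ) * kD / LD ^ 2)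
        - ((n : ℝ) - 1) * lamD * MP * Umax := by
  intro f JS JD bH lamS lamD lamM Fmax
  have hn1 : 1 ≤ n := i.pos
  have hs2 : (1:ℝ) ≤ Real.sqrt 2 := by
    nlinarith [Real.sq_sqrt (show (0:ℝ) ≤ 2 by norm_num), Real.sqrt_nonneg 2]
  have hcard : ∀ m : Fin n, ((Finset.univ.erase m).card : ℝ) = (n : ℝ) - 1 := by
    intro m
    rw [Finset.card_erase_of_mem (Finset.mem_univ m), Finset.card_univ, Fintype.card_fin,
      Nat.cast_sub hn1, Nat.cast_one]
  have hnn1 : (0:ℝ) ≤ (n : ℝ) - 1 := by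
    have : (1:ℝ) ≤ (n:ℝ) := by exact_mod_cast hn1
    linarith
  have hn0 : (0:ℝ) ≤ (n : ℝ) := by positivity
  have hMP0 : 0 ≤ MP := (norm_nonneg _).trans (hSP i)
  have hU0 : 0 ≤ Umax := (norm_nonneg _).trans (hU i)
  have hMG0 : 0 ≤ MG := (norm_nonneg _).trans (hSG i)
  have hFmax_def : Fmax = max (kS * LS + kS * R ^ 3 / LS ^ 2)
      (kS * MS + kS * R ^ 3 / MS ^ 2) := rfl
  have hlamS_def : lamS = Real.sqrt 2 * kS + (3 + Real.sqrt 2) * kS * R ^ 3 / LS ^ 3 := rfl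
  have hlamD_def : lamD = (3 + Real.sqrt 2) * kD / LD ^ 3 := rfl
  have hlamM_def : lamM = ((n : ℝ) - 1) * kS * (Real.sqrt 2 + (3 + Real.sqrt 2) * R ^ 3 / LS ^ 3)
      + Real.sqrt 2 * kG + (n : ℝ) * (3 + Real.sqrt 2) * kD / LD ^ 3 := rfl
  have hFmax0 : 0 ≤ Fmax := by
    rw [hFmax_def]
    exact le_trans (by positivity : (0:ℝ) ≤ kS * LS + kS * R ^ 3 / LS ^ 2) (le_max_left _ _)
  have hlamS0 : 0 ≤ lamS := by
    rw [hlamS_def]; positivity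
  have hlamD0 : 0 ≤ lamD := by
    rw [hlamD_def]; positivity
  have hlamM0 : 0 ≤ lamM := by
    rw [hlamM_def]
    have h1 : (0:ℝ) ≤ ((n : ℝ) - 1) * kS *
        (Real.sqrt 2 + (3 + Real.sqrt 2) * R ^ 3 / LS ^ 3) :=
      mul_nonneg (mul_nonneg hnn1 hkS.le) (by positivity)
    have h2 : (0:ℝ) ≤ Real.sqrt 2 * kG := by positivity
    have h3 : (0:ℝ) ≤ (n : ℝ) * (3 + Real.sqrt 2) * kD / LD ^ 3 := by positivity
    linarith
  set Fb : ℝ := ((n : ℝ) - 1) * Fmax + kG * MG + (n : ℝ) * (kD / LD ^ 2) with hFb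
  have hFb0 : 0 ≤ Fb := by
    rw [hFb]
    have h1 : (0:ℝ) ≤ ((n : ℝ) - 1) * Fmax := mul_nonneg hnn1 hFmax0
    have h2 : (0:ℝ) ≤ kG * MG := mul_nonneg hkG.le hMG0
    have h3 : (0:ℝ) ≤ (n : ℝ) * (kD / LD ^ 2) := by positivity
    linarith
  -- bound on the dynamics of each sheep
  have hfj : ∀ j, ‖f j‖ ≤ Fb := by
    intro j
    have h := fnorm_bound kS kG kD R LS MS MG LD hkS hkG hkD hR hLS hLD xG xS xD j
      (fun j' hj' => hSS j' j hj') (hSD j) (hSG j)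
    rw [hcard j, ← hFmax_def] at h
    exact h
  -- bounds on the Jacobians
  have hJSne : ∀ j : Fin n, j ≠ i → ‖JS j‖ ≤ lamS := by
    intro j hj
    have h := JS_ne_bound kS kG kD R LS hLS xG xS xD i j hj (hSS j i hj).1
    refine h.trans ?_
    rw [hlamS_def, abs_of_pos hkS, abs_of_pos (mul_pos hkS (pow_pos hR 3))]
    have hb : (0:ℝ) ≤ kS * R ^ 3 / LS ^ 3 := by positivity
    have h1 : 0 ≤ (Real.sqrt 2 - 1) * kS := mul_nonneg (by linarith) hkS.le
    have h2 : 0 ≤ (Real.sqrt 2 - 1) * (kS * R ^ 3 / LS ^ 3) := mul_nonneg (by linarith) hb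
    have e : Real.sqrt 2 * kS + (3 + Real.sqrt 2) * kS * R ^ 3 / LS ^ 3
        - (kS + 4 * (kS * R ^ 3) / LS ^ 3)
        = (Real.sqrt 2 - 1) * kS + (Real.sqrt 2 - 1) * (kS * R ^ 3 / LS ^ 3) := by ring
    linarith
  have hJSi : ‖JS i‖ ≤ lamM := by
    have h := JS_eq_bound kS kG kD R LS LD hLS hLD xG xS xD i
      (fun j' hj' => (hSS j' i hj').1) (hSD i)
    rw [hcard i] at h
    refine h.trans ?_
    rw [hlamM_def, abs_of_pos hkS, abs_of_pos hkG, abs_of_pos hkD,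
      abs_of_pos (mul_pos hkS (pow_pos hR 3))]
    have hb1 : (0:ℝ) ≤ kS * R ^ 3 / LS ^ 3 := by positivity
    have hb2 : (0:ℝ) ≤ kD / LD ^ 3 := by positivity
    have h21 : (0:ℝ) ≤ Real.sqrt 2 - 1 := by linarith
    have p1 : 0 ≤ ((n:ℝ) - 1) * ((Real.sqrt 2 - 1) * kS
        + (Real.sqrt 2 - 1) * (kS * R ^ 3 / LS ^ 3)) :=
      mul_nonneg hnn1 (add_nonneg (mul_nonneg h21 hkS.le) (mul_nonneg h21 hb1))
    have p2 : 0 ≤ (Real.sqrt 2 - 1) * kG := mul_nonneg h21 hkG.le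
    have p3 : 0 ≤ (n:ℝ) * ((Real.sqrt 2 - 1) * (kD / LD ^ 3)) :=
      mul_nonneg hn0 (mul_nonneg h21 hb2)
    have e : (((n:ℝ) - 1) * kS * (Real.sqrt 2 + (3 + Real.sqrt 2) * R ^ 3 / LS ^ 3)
          + Real.sqrt 2 * kG + (n:ℝ) * (3 + Real.sqrt 2) * kD / LD ^ 3)
        - (((n:ℝ) - 1) * (kS + 4 * (kS * R ^ 3) / LS ^ 3) + kG + (n:ℝ) * (4 * kD / LD ^ 3))
        = ((n:ℝ) - 1) * ((Real.sqrt 2 - 1) * kS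
            + (Real.sqrt 2 - 1) * (kS * R ^ 3 / LS ^ 3))
          + (Real.sqrt 2 - 1) * kG
          + (n:ℝ) * ((Real.sqrt 2 - 1) * (kD / LD ^ 3)) := by ring
    linarith
  have hJDl : ∀ l, ‖JD l‖ ≤ lamD := by
    intro l
    have h := JD_bound kS kG kD R LD hLD xG xS xD i l (hSD i l)
    refine h.trans ?_
    rw [hlamD_def, abs_of_pos hkD]
    have hb : (0:ℝ) ≤ kD / LD ^ 3 := by positivity
    have h1 : 0 ≤ (Real.sqrt 2 - 1) * (kD / LD ^ 3) := mul_nonneg (by linarith) hb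
    have e : (3 + Real.sqrt 2) * kD / LD ^ 3 - 4 * kD / LD ^ 3
        = (Real.sqrt 2 - 1) * (kD / LD ^ 3) := by ring
    linarith
  -- norm of the sum over all sheep Jacobians
  have hsum1 : ‖∑ j, JS j (f j)‖ ≤ (lamM + ((n : ℝ) - 1) * lamS) * Fb := by
    have hterm : ∀ j ∈ Finset.univ.erase i, ‖JS j (f j)‖ ≤ lamS * Fb := fun j hj =>
      (ContinuousLinearMap.le_opNorm _ _).trans
        (mul_le_mul (hJSne j (Finset.ne_of_mem_erase hj)) (hfj j) (norm_nonneg _) hlamS0)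
    calc ‖∑ j, JS j (f j)‖ ≤ ∑ j, ‖JS j (f j)‖ := norm_sum_le _ _
      _ = ‖JS i (f i)‖ + ∑ j ∈ Finset.univ.erase i, ‖JS j (f j)‖ :=
          (Finset.add_sum_erase _ _ (Finset.mem_univ i)).symm
      _ ≤ lamM * Fb + ((n : ℝ) - 1) * (lamS * Fb) := by
          have h1 : ‖JS i (f i)‖ ≤ lamM * Fb :=
            (ContinuousLinearMap.le_opNorm _ _).trans
              (mul_le_mul hJSi (hfj i) (norm_nonneg _) hlamM0)
          have h2 := Finset.sum_le_card_nsmul _ _ _ hterm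
          rw [nsmul_eq_mul, hcard i] at h2
          linarith
      _ = (lamM + ((n : ℝ) - 1) * lamS) * Fb := by ring
  have hsum2 : ‖∑ l ∈ Finset.univ.erase k, JD l (u l)‖ ≤ ((n : ℝ) - 1) * (lamD * Umax) := by
    refine (norm_sum_le _ _).trans ?_
    have h2 := Finset.sum_le_card_nsmul (Finset.univ.erase k) _ (lamD * Umax)
      (fun l _ => (ContinuousLinearMap.le_opNorm _ _).trans
        (mul_le_mul (hJDl l) (hU l) (norm_nonneg _) hlamD0))
    rwa [nsmul_eq_mul, hcard k] at h2
  have hαf : ‖α • f i‖ ≤ α * Fb := by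
    have e := norm_smul α (f i)
    rw [e, Real.norm_eq_abs, abs_of_pos hα]
    exact mul_le_mul_of_nonneg_left (hfj i) hα.le
  have hSnorm : ‖(∑ j, JS j (f j)) + α • f i + ∑ l ∈ Finset.univ.erase k, JD l (u l)‖
      ≤ (α + lamM + ((n : ℝ) - 1) * lamS) * Fb + ((n : ℝ) - 1) * (lamD * Umax) := by
    calc ‖(∑ j, JS j (f j)) + α • f i + ∑ l ∈ Finset.univ.erase k, JD l (u l)‖
        ≤ ‖∑ j, JS j (f j)‖ + ‖α • f i‖ + ‖∑ l ∈ Finset.univ.erase k, JD l (u l)‖ :=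
          norm_add₃_le
      _ ≤ (lamM + ((n : ℝ) - 1) * lamS) * Fb + α * Fb + ((n : ℝ) - 1) * (lamD * Umax) := by
          linarith
      _ = (α + lamM + ((n : ℝ) - 1) * lamS) * Fb + ((n : ℝ) - 1) * (lamD * Umax) := by ring
  have hinner : ⟪xS i - xP,
      (∑ j, JS j (f j)) + α • f i + ∑ l ∈ Finset.univ.erase k, JD l (u l)⟫
      ≥ -(MP * ((α + lamM + ((n : ℝ) - 1) * lamS) * Fb + ((n : ℝ) - 1) * (lamD * Umax))) := by
    set Svec := (∑ j, JS j (f j)) + α • f i + ∑ l ∈ Finset.univ.erase k, JD l (u l) with hSvec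
    have h1 : |⟪xS i - xP, Svec⟫| ≤ ‖xS i - xP‖ * ‖Svec‖ := abs_real_inner_le_norm _ _
    have h2 : ‖xS i - xP‖ * ‖Svec‖
        ≤ MP * ((α + lamM + ((n : ℝ) - 1) * lamS) * Fb + ((n : ℝ) - 1) * (lamD * Umax)) :=
      mul_le_mul (hSP i) hSnorm (norm_nonneg _) hMP0
    have h3 := neg_abs_le ⟪xS i - xP, Svec⟫
    linarith
  have hquad : (0:ℝ) ≤ ⟪f i, f i⟫ := real_inner_self_nonneg
  have hh2 : (0:ℝ) ≤ (β / 2) * (‖xS i - xP‖ ^ 2 - (r + Rp) ^ 2) :=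
    mul_nonneg (by positivity) hh
  have hRHS : -(α + lamM + ((n : ℝ) - 1) * lamS) * MP *
        (((n : ℝ) - 1) * Fmax + kG * MG + (n : ℝ) * kD / LD ^ 2)
      - ((n : ℝ) - 1) * lamD * MP * Umax
      = -(MP * ((α + lamM + ((n : ℝ) - 1) * lamS) * Fb + ((n : ℝ) - 1) * (lamD * Umax))) := by
    rw [hFb]; ring
  show bH ≥ _
  rw [ge_iff_le, hRHS]
  have hbH_def : bH = ⟪f i, f i⟫ + (β / 2) * (‖xS i - xP‖ ^ 2 - (r + Rp) ^ 2) +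
      ⟪xS i - xP,
        (∑ j, JS j (f j)) + α • f i + ∑ l ∈ Finset.univ.erase k, JD l (u l)⟫ := rfl
  rw [hbH_def]
  calc -(MP * ((α + lamM + ((n : ℝ) - 1) * lamS) * Fb + ((n : ℝ) - 1) * (lamD * Umax)))
      = 0 + 0 + -(MP * ((α + lamM + ((n : ℝ) - 1) * lamS) * Fb
          + ((n : ℝ) - 1) * (lamD * Umax))) := by ring
    _ ≤ ⟪f i, f i⟫ + (β / 2) * (‖xS i - xP‖ ^ 2 - (r + Rp) ^ 2) +
        ⟪xS i - xP,
          (∑ j, JS j (f j)) + α • f i + ∑ l ∈ Finset.univ.erase k, JD l (u l)⟫ :=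
      add_le_add (add_le_add hquad hh2) hinner
end

section
/- Let h(x) = ‖x − x_P‖² − c² for c > 0 and suppose along a C² trajectory x(t) the inequality ḧ + αḣ + βh ≥ 0 holds with α = p₁ + p₂, β = p₁p₂, p₁,p₂ > 0, h(x(0)) > 0, ḣ(0) + p₁h(x(0)) > 0. Then ‖x(t) − x_P‖ > c for all t ≥ 0, i.e. the trajectory never enters the open ball of radius c around x_P. -/
open scoped RealInnerProductSpace

lemma aux_pos (f f' : ℝ → ℝ) (p : ℝ) (hp : 0 < p)
    (hdf : ∀ t ≥ (0:ℝ), HasDerivAt f (f' t) t)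
    (hf0 : 0 < f 0)
    (hi : ∀ t ≥ (0:ℝ), 0 ≤ f' t + p * f t) :
    ∀ t ≥ (0:ℝ), 0 < f t := by
  set u : ℝ → ℝ := fun t => Real.exp (p * t) * f t with hu
  have hdu : ∀ t ≥ (0:ℝ), HasDerivAt u (Real.exp (p * t) * (f' t + p * f t)) t := by
    intro t ht
    have h1 : HasDerivAt (fun t => Real.exp (p * t)) (p * Real.exp (p * t)) t := by
      have := (Real.hasDerivAt_exp (p * t)).comp t ((hasDerivAt_id t).const_mul p)
      simpa [mul_comm, Function.comp_def] using this
    have := h1.mul (hdf t ht)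
    refine this.congr_deriv ?_
    ring
  have hmono : MonotoneOn u (Set.Ici (0:ℝ)) := by
    apply monotoneOn_of_deriv_nonneg (convex_Ici 0)
    · exact fun t ht => ((hdu t ht).continuousAt).continuousWithinAt
    · intro t ht
      rw [interior_Ici] at ht
      exact ((hdu t ht.le).differentiableAt).differentiableWithinAt
    · intro t ht
      rw [interior_Ici] at ht
      rw [(hdu t ht.le).deriv]
      exact mul_nonneg (Real.exp_nonneg _) (hi t ht.le)
  intro t ht
  have := hmono (Set.self_mem_Ici) (Set.mem_Ici.mpr ht) ht
  have hu0 : u 0 = f 0 := by simp [hu]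
  have hut : 0 < u t := lt_of_lt_of_le (hu0 ▸ hf0) this
  have hexp : 0 < Real.exp (p * t) := Real.exp_pos _
  simp only [hu] at hut
  nlinarith [hut]

theorem stmt_15 (x x' x'' : ℝ → EuclideanSpace ℝ (Fin 2))
    (xP : EuclideanSpace ℝ (Fin 2)) (c p₁ p₂ : ℝ)
    (hc : 0 < c) (hp₁ : 0 < p₁) (hp₂ : 0 < p₂)
    (hd : ∀ t ≥ (0:ℝ), HasDerivAt x (x' t) t)
    (hd' : ∀ t ≥ (0:ℝ), HasDerivAt x' (x'' t) t)
    (h0 : ‖x 0 - xP‖ ^ 2 - c ^ 2 > 0)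
    (hv0 : 2 * ⟪x 0 - xP, x' 0⟫ + p₁ * (‖x 0 - xP‖ ^ 2 - c ^ 2) > 0)
    (hineq : ∀ t ≥ (0:ℝ),
      (2 * ⟪x' t, x' t⟫ + 2 * ⟪x t - xP, x'' t⟫)
        + (p₁ + p₂) * (2 * ⟪x t - xP, x' t⟫)
        + (p₁ * p₂) * (‖x t - xP‖ ^ 2 - c ^ 2) ≥ 0) :
    ∀ t ≥ (0:ℝ), ‖x t - xP‖ > c := by
  set h : ℝ → ℝ := fun t => ‖x t - xP‖ ^ 2 - c ^ 2 with hh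
  set h' : ℝ → ℝ := fun t => 2 * ⟪x t - xP, x' t⟫ with hh'
  set h'' : ℝ → ℝ := fun t => 2 * ⟪x' t, x' t⟫ + 2 * ⟪x t - xP, x'' t⟫ with hh''
  have heq : ∀ t, h t = ⟪x t - xP, x t - xP⟫ - c ^ 2 := by
    intro t
    simp only [hh, real_inner_self_eq_norm_sq]
  have hdh : ∀ t ≥ (0:ℝ), HasDerivAt h (h' t) t := by
    intro t ht
    have hdx : HasDerivAt (fun t => x t - xP) (x' t) t := (hd t ht).sub_const xP
    have := (hdx.inner ℝ hdx).sub_const (c ^ 2)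
    have h2 : HasDerivAt (fun s => ⟪x s - xP, x s - xP⟫ - c ^ 2)
        (⟪x t - xP, x' t⟫ + ⟪x' t, x t - xP⟫) t := this
    have h3 : HasDerivAt h (⟪x t - xP, x' t⟫ + ⟪x' t, x t - xP⟫) t := by
      apply h2.congr_of_eventuallyEq
      filter_upwards with s using (heq s)
    convert h3 using 1
    rw [real_inner_comm (x' t) (x t - xP)]
    simp [hh']; linarith [real_inner_comm (x' t) (x t - xP)]
  have hdh' : ∀ t ≥ (0:ℝ), HasDerivAt h' (h'' t) t := by
    intro t ht
    have hdx : HasDerivAt (fun t => x t - xP) (x' t) t := (hd t ht).sub_const xP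
    have := (hdx.inner ℝ (hd' t ht)).const_mul 2
    refine this.congr_deriv ?_
    rw [real_inner_comm (x' t) (x' t)]
    simp [hh'']; ring
  -- g = h' + p₁ h
  have hg : ∀ t ≥ (0:ℝ), 0 < h' t + p₁ * h t := by
    apply aux_pos (fun t => h' t + p₁ * h t) (fun t => h'' t + p₁ * h' t) p₂ hp₂
    · intro t ht
      exact (hdh' t ht).add ((hdh t ht).const_mul p₁)
    · simpa [hh, hh'] using hv0
    · intro t ht
      have := hineq t ht
      simp only [hh, hh', hh'']
      nlinarith [this]
  have hpos : ∀ t ≥ (0:ℝ), 0 < h t := by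
    apply aux_pos h h' p₁ hp₁ hdh
    · simpa [hh] using h0
    · intro t ht
      exact (hg t ht).le
  intro t ht
  have := hpos t ht
  simp only [hh] at this
  nlinarith [norm_nonneg (x t - xP)]
end
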